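/- For all real numbers x and y, sin²x + sin²y + sin²(x + y) ≤ 9/4, and equality holds at x = y = 2π/3. Consequently, in bearing-only localization of a target by three sensors at common distance r from the target with measurement error variance σ², where the Fisher information determinant equals (1/(r⁴σ⁴))·(sin²θ₁₂ + sin²θ₁₃ + sin²θ₂₃) with θ₂₃ = 2π − θ₁₂ − θ₁₃, the determinant is at most 9/(4r⁴σ⁴), and this maximum is attained when θ₁₂ = θ₁₃ = θ₂₃ = 2π/3. -/

import Mathlib

open Real

lemma key_ineq (x y : ℝ) : sin x ^ 2 + sin y ^ 2 + sin (x + y) ^ 2 ≤ 9 / 4 := by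
  have hx := sin_sq_add_cos_sq x
  have hy := sin_sq_add_cos_sq y
  rw [sin_add]
  nlinarith [sq_nonneg (cos x * cos y - sin x * sin y + (cos x * cos y + sin x * sin y) / 2),
    sq_nonneg (sin x * cos y - cos x * sin y), sq_nonneg (sin x * cos y + cos x * sin y)]

lemma val23 : sin (2 * π / 3) ^ 2 = 3 / 4 := by
  have : (2 : ℝ) * π / 3 = π - π / 3 := by ring
  rw [this, sin_pi_sub, sin_pi_div_three]
  rw [div_pow, sq_sqrt (by norm_num : (3:ℝ) ≥ 0)]
  norm_num

lemma val43 : sin (2 * π / 3 + 2 * π / 3) ^ 2 = 3 / 4 := by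
  have : (2 : ℝ) * π / 3 + 2 * π / 3 = π + π / 3 := by ring
  rw [this, sin_add, sin_pi, cos_pi, sin_pi_div_three]
  rw [show (0:ℝ) * cos (π/3) + -1 * (Real.sqrt 3 / 2) = -(Real.sqrt 3 / 2) by ring, neg_sq]
  rw [div_pow, sq_sqrt (by norm_num : (3:ℝ) ≥ 0)]
  norm_num

/-- `sin²x + sin²y + sin²(x+y) ≤ 9/4` for all reals, with equality
at `x = y = 2π/3`.  Consequently, in bearing-only localization of a target by
three sensors at common distance `r` with measurement error variance `σ²`,
where the Fisher information determinant is
`(1/(r⁴σ⁴))(sin²θ₁₂ + sin²θ₁₃ + sin²θ₂₃)` with `θ₂₃ = 2π − θ₁₂ − θ₁₃`,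
the determinant is at most `9/(4r⁴σ⁴)`, attained when
`θ₁₂ = θ₁₃ = θ₂₃ = 2π/3`. -/
theorem fisher_determinant_bound :
    (∀ x y : ℝ, sin x ^ 2 + sin y ^ 2 + sin (x + y) ^ 2 ≤ 9 / 4) ∧
    (sin (2 * π / 3) ^ 2 + sin (2 * π / 3) ^ 2 +
      sin (2 * π / 3 + 2 * π / 3) ^ 2 = 9 / 4) ∧
    (∀ r σ θ12 θ13 θ23 : ℝ, 0 < r → 0 < σ → θ23 = 2 * π - θ12 - θ13 →
      (1 / (r ^ 4 * σ ^ 4)) * (sin θ12 ^ 2 + sin θ13 ^ 2 + sin θ23 ^ 2) ≤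
        9 / (4 * r ^ 4 * σ ^ 4)) ∧
    (∀ r σ θ12 θ13 θ23 : ℝ, 0 < r → 0 < σ →
      θ12 = 2 * π / 3 → θ13 = 2 * π / 3 → θ23 = 2 * π - θ12 - θ13 →
      (1 / (r ^ 4 * σ ^ 4)) * (sin θ12 ^ 2 + sin θ13 ^ 2 + sin θ23 ^ 2) =
        9 / (4 * r ^ 4 * σ ^ 4)) := by
  refine ⟨key_ineq, by rw [val23, val43]; norm_num, ?_, ?_⟩
  · intro r σ θ12 θ13 θ23 hr hσ h23
    have hsq : sin θ23 ^ 2 = sin (θ12 + θ13) ^ 2 := by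
      rw [h23, show 2 * π - θ12 - θ13 = 2 * π - (θ12 + θ13) by ring,
        sin_sub, sin_two_pi, cos_two_pi]
      ring
    have hS : sin θ12 ^ 2 + sin θ13 ^ 2 + sin θ23 ^ 2 ≤ 9 / 4 := by
      rw [hsq]; exact key_ineq θ12 θ13
    have hpos : (0:ℝ) < r ^ 4 * σ ^ 4 := by positivity
    rw [show (9:ℝ) / (4 * r ^ 4 * σ ^ 4) = 1 / (r ^ 4 * σ ^ 4) * (9 / 4) by
      field_simp]
    exact mul_le_mul_of_nonneg_left hS (by positivity)
  · intro r σ θ12 θ13 θ23 hr hσ h12 h13 h23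
    subst h12 h13 h23
    have hsq : sin (2 * π - 2 * π / 3 - 2 * π / 3) ^ 2
        = sin (2 * π / 3 + 2 * π / 3) ^ 2 := by
      rw [show 2 * π - 2 * π / 3 - 2 * π / 3 = 2 * π - (2 * π / 3 + 2 * π / 3) by ring,
        sin_sub, sin_two_pi, cos_two_pi]
      ring
    rw [hsq, val23, val43]
    have hpos : (0:ℝ) < r ^ 4 * σ ^ 4 := by positivity
    field_simp
    ring
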